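/- (Minimizers in the degenerate case.) Let M be a real symmetric n×n matrix with eigenvalues λ₁ ≤ … ≤ λₙ and an associated orthonormal basis of eigenvectors φ₁,…,φₙ, let u ∈ ℝⁿ and set γᵢ = φᵢᵀu. Let E₁ = { i : λᵢ = λ₁ } and E₊ = { i : λᵢ > λ₁ }. Suppose γᵢ = 0 for all i ∈ E₁ and Σ_{i ∈ E₊} γᵢ²/(λᵢ − λ₁)² ≤ 1. Then every vector of the form x = Σ_{i ∈ E₊} (−γᵢ/(λᵢ − λ₁)) φᵢ + w, where w lies in the eigenspace of M for λ₁ and the coefficients satisfy ‖w‖₂² = 1 − Σ_{i ∈ E₊} γᵢ²/(λᵢ − λ₁)² (so that ‖x‖₂ = 1), is a global minimizer of x ↦ (1/2) xᵀMx + ⟨u,x⟩ over the unit sphere in ℝⁿ. -/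

import Mathlib

open scoped RealInnerProductSpace
open Matrix

/-- Minimizers in the degenerate case: if `M` is symmetric with eigenvalues
`λ₁ ≤ … ≤ λₙ` and orthonormal eigenvectors `φ₁,…,φₙ`, `γᵢ = φᵢᵀu`, `γᵢ = 0` for all
`i` with `λᵢ = λ₁`, and `Σ_{λᵢ > λ₁} γᵢ²/(λᵢ - λ₁)² ≤ 1`, then every vector
`x = Σ_{λᵢ > λ₁} (-γᵢ/(λᵢ - λ₁)) φᵢ + w` with `w` in the `λ₁`-eigenspace and
`‖w‖² = 1 - Σ_{λᵢ > λ₁} γᵢ²/(λᵢ - λ₁)²` is a unit-norm global minimizer of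
`x ↦ (1/2) xᵀMx + ⟨u,x⟩` over the unit sphere. -/
theorem degenerate_case_minimizers (n : ℕ) (hn : 0 < n)
    (M : Matrix (Fin n) (Fin n) ℝ) (hM : Mᵀ = M)
    (lam : Fin n → ℝ) (hmono : Monotone lam)
    (φ : Fin n → EuclideanSpace ℝ (Fin n)) (hON : Orthonormal ℝ φ)
    (heig : ∀ i, Matrix.toEuclideanLin M (φ i) = lam i • φ i)
    (u : EuclideanSpace ℝ (Fin n))
    (hγ : ∀ i, lam i = lam ⟨0, hn⟩ → ⟪φ i, u⟫ = 0)
    (hsum : ∑ i ∈ Finset.univ.filter (fun i => lam ⟨0, hn⟩ < lam i),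
        (⟪φ i, u⟫) ^ 2 / (lam i - lam ⟨0, hn⟩) ^ 2 ≤ 1)
    (w : EuclideanSpace ℝ (Fin n))
    (hw : Matrix.toEuclideanLin M w = lam ⟨0, hn⟩ • w)
    (hwnorm : ‖w‖ ^ 2 = 1 - ∑ i ∈ Finset.univ.filter (fun i => lam ⟨0, hn⟩ < lam i),
        (⟪φ i, u⟫) ^ 2 / (lam i - lam ⟨0, hn⟩) ^ 2) :
    ‖(∑ i ∈ Finset.univ.filter (fun i => lam ⟨0, hn⟩ < lam i),
        (-(⟪φ i, u⟫) / (lam i - lam ⟨0, hn⟩)) • φ i) + w‖ = 1 ∧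
    ∀ y : EuclideanSpace ℝ (Fin n), ‖y‖ = 1 →
      (1 / 2) * ⟪(∑ i ∈ Finset.univ.filter (fun i => lam ⟨0, hn⟩ < lam i),
            (-(⟪φ i, u⟫) / (lam i - lam ⟨0, hn⟩)) • φ i) + w,
          Matrix.toEuclideanLin M ((∑ i ∈ Finset.univ.filter (fun i => lam ⟨0, hn⟩ < lam i),
            (-(⟪φ i, u⟫) / (lam i - lam ⟨0, hn⟩)) • φ i) + w)⟫ +
        ⟪u, (∑ i ∈ Finset.univ.filter (fun i => lam ⟨0, hn⟩ < lam i),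
            (-(⟪φ i, u⟫) / (lam i - lam ⟨0, hn⟩)) • φ i) + w⟫ ≤
      (1 / 2) * ⟪y, Matrix.toEuclideanLin M y⟫ + ⟪u, y⟫ := by
  classical
  set i0 : Fin n := ⟨0, hn⟩ with hi0
  set T := Matrix.toEuclideanLin M with hTdef
  set x : EuclideanSpace ℝ (Fin n) :=
    (∑ i ∈ Finset.univ.filter (fun i => lam i0 < lam i),
      (-(⟪φ i, u⟫) / (lam i - lam i0)) • φ i) + w with hxdef
  -- symmetry of T
  have hHerm : M.IsHermitian := by
    show Mᴴ = M
    ext i j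
    have := congrFun (congrFun hM j) i
    simpa [Matrix.conjTranspose_apply, Matrix.transpose_apply] using this.symm
  have hsymm : ∀ a b : EuclideanSpace ℝ (Fin n), ⟪T a, b⟫ = ⟪a, T b⟫ :=
    fun a b => (Matrix.isHermitian_iff_isSymmetric.1 hHerm) a b
  -- orthonormal basis
  haveI : Nonempty (Fin n) := ⟨i0⟩
  have card : Fintype.card (Fin n) = Module.finrank ℝ (EuclideanSpace ℝ (Fin n)) := by simp
  let b0 := basisOfLinearIndependentOfCardEqFinrank hON.linearIndependent card
  have hb0 : ⇑b0 = φ := coe_basisOfLinearIndependentOfCardEqFinrank _ _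
  let b : OrthonormalBasis (Fin n) ℝ (EuclideanSpace ℝ (Fin n)) :=
    b0.toOrthonormalBasis (by rwa [hb0])
  have hb : ∀ i, b i = φ i := fun i => by
    simp only [b, Module.Basis.coe_toOrthonormalBasis, hb0]
  have hrep : ∀ y : EuclideanSpace ℝ (Fin n), ∑ i, ⟪φ i, y⟫ • φ i = y := by
    intro y
    have := b.sum_repr' y
    simpa [hb] using this
  -- expansions
  have hexp : ∀ y z : EuclideanSpace ℝ (Fin n), ⟪y, z⟫ = ∑ i, ⟪φ i, y⟫ * ⟪φ i, z⟫ := by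
    intro y z
    nth_rewrite 1 [← hrep y]
    rw [sum_inner]
    exact Finset.sum_congr rfl fun i _ => real_inner_smul_left _ _ _
  have hquad : ∀ y : EuclideanSpace ℝ (Fin n), ⟪y, T y⟫ = ∑ i, lam i * ⟪φ i, y⟫ ^ 2 := by
    intro y
    rw [hexp y (T y)]
    refine Finset.sum_congr rfl fun i _ => ?_
    rw [← hsymm, heig, real_inner_smul_left]
    ring
  have hnormsq : ∀ y : EuclideanSpace ℝ (Fin n), ‖y‖ ^ 2 = ∑ i, ⟪φ i, y⟫ ^ 2 := by
    intro y
    rw [← real_inner_self_eq_norm_sq, hexp y y]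
    exact Finset.sum_congr rfl fun i _ => (sq _).symm
  -- the quadratic functional in coordinates
  have hF : ∀ y : EuclideanSpace ℝ (Fin n),
      (1 / 2) * ⟪y, T y⟫ + ⟪u, y⟫
        = ∑ i, ((1 / 2) * lam i * ⟪φ i, y⟫ ^ 2 + ⟪φ i, u⟫ * ⟪φ i, y⟫) := by
    intro y
    rw [hquad y, hexp u y, Finset.mul_sum, ← Finset.sum_add_distrib]
    exact Finset.sum_congr rfl fun i _ => by ring
  -- λ₁ is the smallest eigenvalue
  have hmin : ∀ i, lam i0 ≤ lam i := fun i => hmono (by exact Fin.mk_le_of_le_val (Nat.zero_le _))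
  have hnotS : ∀ i, ¬ lam i0 < lam i → lam i = lam i0 := fun i hi =>
    le_antisymm (not_lt.1 hi) (hmin i)
  -- orthogonality of w to eigenvectors with larger eigenvalue
  have horth : ∀ i, lam i0 < lam i → ⟪φ i, w⟫ = 0 := by
    intro i hi
    have h1 : lam i * ⟪φ i, w⟫ = lam i0 * ⟪φ i, w⟫ := by
      have h := hsymm (φ i) w
      rw [heig, hw, real_inner_smul_left, real_inner_smul_right] at h
      exact h
    have h2 : (lam i - lam i0) * ⟪φ i, w⟫ = 0 := by ring_nf; linarith [h1]
    rcases mul_eq_zero.1 h2 with h | h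
    · exact absurd h (sub_ne_zero.2 (ne_of_gt hi))
    · exact h
  -- coordinates of x
  have hONite : ∀ i j, ⟪φ i, φ j⟫ = if i = j then (1:ℝ) else 0 := fun i j =>
    (orthonormal_iff_ite (𝕜 := ℝ)).1 hON i j
  have hcx : ∀ i, ⟪φ i, x⟫ =
      (if lam i0 < lam i then -(⟪φ i, u⟫) / (lam i - lam i0) else ⟪φ i, w⟫) := by
    intro i
    rw [hxdef, inner_add_right, inner_sum]
    have hsum' : ∑ j ∈ Finset.univ.filter (fun j => lam i0 < lam j),
        ⟪φ i, (-(⟪φ j, u⟫) / (lam j - lam i0)) • φ j⟫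
        = if lam i0 < lam i then -(⟪φ i, u⟫) / (lam i - lam i0) else 0 := by
      rw [Finset.sum_congr rfl (fun j _ => by
        rw [real_inner_smul_right, hONite i j])]
      simp [Finset.sum_ite_eq, Finset.mem_filter, mul_ite]
    rw [hsum']
    by_cases hi : lam i0 < lam i
    · simp [hi, horth i hi]
    · simp [hi]
  -- terms and lower bounds
  set L : Fin n → ℝ := fun i =>
    if lam i0 < lam i then -((⟪φ i, u⟫ ^ 2 / (lam i - lam i0)) / 2) else 0 with hL
  have hterm_ge : ∀ (c : ℝ) (i : Fin n),
      L i ≤ (1 / 2) * (lam i - lam i0) * c ^ 2 + ⟪φ i, u⟫ * c := by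
    intro c i
    by_cases hi : lam i0 < lam i
    · have hd : (0:ℝ) < lam i - lam i0 := sub_pos.2 hi
      have hdc : ⟪φ i, u⟫ ^ 2 / (lam i - lam i0) * (lam i - lam i0) = ⟪φ i, u⟫ ^ 2 :=
        div_mul_cancel₀ _ (ne_of_gt hd)
      rw [hL]; simp only [if_pos hi]
      nlinarith [sq_nonneg ((lam i - lam i0) * c + ⟪φ i, u⟫), hd, hdc]
    · have he : lam i = lam i0 := hnotS i hi
      rw [hL]; simp only [if_neg hi]
      rw [hγ i he, he]
      ring_nf
      positivity
  -- general lower bound identity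
  have hFsplit : ∀ y : EuclideanSpace ℝ (Fin n),
      (1 / 2) * ⟪y, T y⟫ + ⟪u, y⟫
        = (1 / 2) * lam i0 * ‖y‖ ^ 2
          + ∑ i, ((1 / 2) * (lam i - lam i0) * ⟪φ i, y⟫ ^ 2 + ⟪φ i, u⟫ * ⟪φ i, y⟫) := by
    intro y
    rw [hF y, hnormsq y, Finset.mul_sum, ← Finset.sum_add_distrib]
    exact Finset.sum_congr rfl fun i _ => by ring
  -- value at x: each term equals L i
  have htx : ∀ i, (1 / 2) * (lam i - lam i0) * ⟪φ i, x⟫ ^ 2 + ⟪φ i, u⟫ * ⟪φ i, x⟫ = L i := by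
    intro i
    rw [hcx i, hL]
    by_cases hi : lam i0 < lam i
    · have hd : lam i - lam i0 ≠ 0 := sub_ne_zero.2 (ne_of_gt hi)
      simp only [if_pos hi]
      field_simp
      ring
    · have he : lam i = lam i0 := hnotS i hi
      simp only [if_neg hi]
      rw [hγ i he, he]
      ring
  -- norm of x
  have hxnorm2 : ‖x‖ ^ 2 = 1 := by
    rw [hnormsq x]
    have : ∀ i, ⟪φ i, x⟫ ^ 2 =
        (if lam i0 < lam i then ⟪φ i, u⟫ ^ 2 / (lam i - lam i0) ^ 2 else ⟪φ i, w⟫ ^ 2) := by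
      intro i
      rw [hcx i]
      by_cases hi : lam i0 < lam i
      · simp only [if_pos hi]; rw [div_pow]; ring_nf
      · simp only [if_neg hi]
    rw [Finset.sum_congr rfl fun i _ => this i]
    rw [Finset.sum_ite]
    have hw2 : ∑ i ∈ Finset.univ.filter (fun i => ¬ lam i0 < lam i), ⟪φ i, w⟫ ^ 2 = ‖w‖ ^ 2 := by
      rw [hnormsq w]
      rw [← Finset.sum_filter_add_sum_filter_not Finset.univ (fun i => lam i0 < lam i)
        (fun i => ⟪φ i, w⟫ ^ 2)]
      have : ∑ i ∈ Finset.univ.filter (fun i => lam i0 < lam i), ⟪φ i, w⟫ ^ 2 = 0 :=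
        Finset.sum_eq_zero fun i hi => by
          rw [horth i (Finset.mem_filter.1 hi).2]; ring
      rw [this, zero_add]
    rw [hw2, hwnorm]
    ring
  have hxnorm : ‖x‖ = 1 := by
    have h0 : (0:ℝ) ≤ ‖x‖ := norm_nonneg x
    nlinarith [hxnorm2]
  refine ⟨hxnorm, fun y hy => ?_⟩
  have hFx : (1 / 2) * ⟪x, T x⟫ + ⟪u, x⟫ = (1 / 2) * lam i0 + ∑ i, L i := by
    rw [hFsplit x, hxnorm2, Finset.sum_congr rfl fun i _ => htx i]
    ring
  have hFy : (1 / 2) * lam i0 + ∑ i, L i ≤ (1 / 2) * ⟪y, T y⟫ + ⟪u, y⟫ := by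
    rw [hFsplit y, hy]
    have := Finset.sum_le_sum (fun i (_ : i ∈ Finset.univ) => hterm_ge (⟪φ i, y⟫) i)
    calc (1 / 2) * lam i0 + ∑ i, L i
        ≤ (1 / 2) * lam i0 + ∑ i, ((1 / 2) * (lam i - lam i0) * ⟪φ i, y⟫ ^ 2
            + ⟪φ i, u⟫ * ⟪φ i, y⟫) := by linarith [this]
      _ = (1 / 2) * lam i0 * 1 ^ 2 + ∑ i, ((1 / 2) * (lam i - lam i0) * ⟪φ i, y⟫ ^ 2
            + ⟪φ i, u⟫ * ⟪φ i, y⟫) := by ring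
  calc (1 / 2) * ⟪x, T x⟫ + ⟪u, x⟫ = (1 / 2) * lam i0 + ∑ i, L i := hFx
    _ ≤ (1 / 2) * ⟪y, T y⟫ + ⟪u, y⟫ := hFy
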